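/- arXiv:2107.13850 — 2 statements merged into one kernel-verified Lean document; each statement's English description precedes it below -/
import Mathlib

section
/- Let A be a unital C*-algebra, E a Hilbert A-module, and suppose {g₁,…,gₙ} ⊆ E is such that the frame operator Sf = ∑_{j=1}^n ⟨f, g_j⟩ g_j equals the identity (i.e., a Parseval frame). If g₁′,…,gₙ′ ∈ E satisfy ‖g_j − g_j′‖ < δ where δ = min{1, ((2M+1)n)⁻¹} and M = max_j ‖g_j‖, then the frame operator S′f = ∑_j ⟨f, g_j′⟩ g_j′ is invertible in L_A(E), and hence {g₁′,…,gₙ′} is a generating set for E. -/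
open scoped ComplexOrder

section StarModuleAux

variable {A : Type*} [NormedRing A] [StarRing A] [CStarRing A]
    [NormedAlgebra ℂ A] [PartialOrder A] [StarOrderedRing A]

lemma aux_star_real_smul (r : ℝ) (a : A) : star (r • a) = r • star a :=
  map_real_smul (starAddEquiv : A ≃+ A) continuous_star r a

lemma aux_star_I : star (Complex.I • (1 : A)) = -(Complex.I • (1 : A)) := by
  set j : A := star (Complex.I • (1 : A)) with hj
  have hjj : j * j = -1 := by
    rw [hj, ← star_mul, smul_mul_assoc, Algebra.mul_smul_comm, one_mul, smul_smul,
      Complex.I_mul_I, neg_smul, one_smul, star_neg, star_one]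
  set u : A := Complex.I • j with hu
  have huu : u * u = 1 := by
    rw [hu, smul_mul_assoc, Algebra.mul_smul_comm, hjj, smul_smul, Complex.I_mul_I,
      neg_smul, one_smul, neg_neg]
  have hstaru : star u = u := by
    have h1 : u = (Complex.I • (1 : A)) * j := by
      rw [smul_mul_assoc, one_mul]
    rw [h1, star_mul, hj, star_star, ← h1]
  set q : A := (2⁻¹ : ℂ) • (1 - u) with hq
  have hq_idem : q * q = q := by
    have expand : (1 - u) * (1 - u) = (2 : ℂ) • (1 - u) := by
      rw [show (1 - u) * (1 - u) = 1 - u - u + u * u by noncomm_ring, huu]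
      module
    rw [hq, smul_mul_assoc, Algebra.mul_smul_comm, expand, smul_smul, smul_smul]
    norm_num
  have hq_star : star q = q := by
    have h2 : q = ((2:ℝ)⁻¹ : ℝ) • (1 - u) := by
      rw [hq, ← Complex.coe_smul]; norm_num
    rw [h2, aux_star_real_smul, star_sub, star_one, hstaru]
  have hq_nonneg : (0 : A) ≤ q := by
    have := star_mul_self_nonneg q
    rwa [hq_star, hq_idem] at this
  have huj : u * j = -(Complex.I • (1:A)) := by
    rw [hu, smul_mul_assoc, hjj, smul_neg]
  have hIu : Complex.I • u = -j := by
    rw [hu, smul_smul, Complex.I_mul_I, neg_smul, one_smul]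
  have hs_star : star (Complex.I • q) = Complex.I • q := by
    have h1 : Complex.I • q = (Complex.I • (1 : A)) * q := by rw [smul_mul_assoc, one_mul]
    have h2 : star (Complex.I • q) = q * j := by rw [h1, star_mul, hj, hq_star]
    have h3 : q * j = Complex.I • q := by
      have h4 : (1 - u) * j = Complex.I • (1 - u) := by
        rw [sub_mul, one_mul, huj, sub_neg_eq_add, smul_sub, hIu, sub_neg_eq_add, add_comm]
      rw [hq, smul_mul_assoc, h4, smul_comm]
    rw [h2, h3]
  have hq_nonpos : (0 : A) ≤ -q := by
    have h4 := star_mul_self_nonneg (Complex.I • q)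
    rwa [hs_star, smul_mul_assoc, Algebra.mul_smul_comm, hq_idem, smul_smul, Complex.I_mul_I,
      neg_smul, one_smul] at h4
  have hq0 : q = 0 := le_antisymm (neg_nonneg.mp hq_nonpos) hq_nonneg
  have h5 : (1 : A) - u = 0 := by
    rcases smul_eq_zero.mp (hq ▸ hq0 : (2⁻¹ : ℂ) • ((1:A) - u) = 0) with h | h
    · norm_num at h
    · exact h
  have hu1 : u = 1 := by rwa [sub_eq_zero, eq_comm] at h5
  have : j = -(Complex.I • (1:A)) := by
    have h6 : Complex.I • u = Complex.I • (1:A) := by rw [hu1]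
    rw [hIu] at h6
    rw [← neg_eq_iff_eq_neg.mpr h6.symm]
  exact this

lemma aux_star_smul (z : ℂ) (a : A) : star (z • a) = (starRingEnd ℂ) z • star a := by
  have h1 : star (z • (1:A)) = (starRingEnd ℂ) z • (1:A) := by
    have hz : z • (1:A) = (z.re : ℝ) • (1:A) + z.im • (Complex.I • (1:A)) := by
      rw [← Complex.coe_smul, ← Complex.coe_smul, smul_smul, ← add_smul, Complex.re_add_im]
    have hz' : (starRingEnd ℂ) z • (1:A) = (z.re : ℝ) • (1:A) - z.im • (Complex.I • (1:A)) := by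
      rw [← Complex.coe_smul, ← Complex.coe_smul, smul_smul, ← sub_smul]
      congr 1
      simp [Complex.ext_iff]
    rw [hz, star_add, aux_star_real_smul, aux_star_real_smul, star_one, aux_star_I, smul_neg,
      hz', sub_eq_add_neg]
  calc star (z • a) = star (a * (z • (1:A))) := by rw [Algebra.mul_smul_comm, mul_one]
    _ = star (z • (1:A)) * star a := by rw [star_mul]
    _ = (starRingEnd ℂ) z • star a := by rw [h1, smul_mul_assoc, one_mul]


end StarModuleAux

/-- Perturbation of a Parseval frame in a Hilbert `A`-module: if `{g₁, …, gₙ}` has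
frame operator equal to the identity and `g₁', …, gₙ'` satisfy `‖gⱼ − gⱼ'‖ < δ`
with `δ = min {1, ((2M+1)n)⁻¹}` and `M = max ⱼ ‖gⱼ‖`, then the frame operator
`S' f = ∑ⱼ ⟨f, gⱼ'⟩·gⱼ'` is invertible, and hence `{g₁', …, gₙ'}` is a generating
set for `E`. -/
theorem parseval_frame_perturbation {A E : Type*}
    [NormedRing A] [StarRing A] [CStarRing A]
    [NormedAlgebra ℂ A] [CompleteSpace A] [PartialOrder A] [StarOrderedRing A]
    [NormedAddCommGroup E] [Module A E] [CompleteSpace E]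
    (ip : E → E → A)
    (h_add : ∀ f g h : E, ip (f + g) h = ip f h + ip g h)
    (h_smul : ∀ (c : A) (f g : E), ip (c • f) g = c * ip f g)
    (h_star : ∀ f g : E, star (ip f g) = ip g f)
    (h_pos : ∀ f : E, 0 ≤ ip f f)
    (h_def : ∀ f : E, ip f f = 0 → f = 0)
    (h_norm : ∀ f : E, ‖f‖ = Real.sqrt ‖ip f f‖)
    (n : ℕ) (g g' : Fin n → E) (M : ℝ)
    (hM : M = ⨆ j : Fin n, ‖g j‖)
    (h_parseval : ∀ f : E, ∑ j, ip f (g j) • g j = f)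
    (h_close : ∀ j : Fin n, ‖g j - g' j‖ < min 1 (((2 * M + 1) * n)⁻¹)) :
    Function.Bijective (fun f : E => ∑ j, ip f (g' j) • g' j) ∧
      ∀ f : E, ∃ c : Fin n → A, f = ∑ j, c j • g' j := by
  letI : StarModule ℂ A := ⟨fun z a => aux_star_smul z a⟩
  letI : CStarAlgebra A :=
    { ‹NormedRing A›, ‹StarRing A›, ‹CStarRing A›, ‹NormedAlgebra ℂ A›,
      ‹StarModule ℂ A›, ‹CompleteSpace A› with }
  -- basic ip lemmas
  have ip_zero_left : ∀ f : E, ip 0 f = 0 := fun f => by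
    have := h_smul 0 0 f; rwa [zero_smul, zero_mul] at this
  have ip_zero_right : ∀ f : E, ip f 0 = 0 := fun f => by
    rw [← h_star 0 f, ip_zero_left, star_zero]
  have ip_smul_right : ∀ (c : A) (f g : E), ip f (c • g) = ip f g * star c := fun c f g => by
    rw [← h_star (c • g) f, h_smul, star_mul, h_star]
  have ip_add_right : ∀ f x y : E, ip f (x + y) = ip f x + ip f y := fun f x y => by
    rw [← h_star (x + y) f, h_add, star_add, h_star, h_star]
  have ip_neg_left : ∀ x y : E, ip (-x) y = -ip x y := fun x y => by
    rw [← neg_one_smul A x, h_smul, neg_one_mul]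
  have ip_sub_left : ∀ x y z : E, ip (x - y) z = ip x z - ip y z := fun x y z => by
    rw [sub_eq_add_neg, h_add, ip_neg_left, sub_eq_add_neg]
  have ip_sub_right : ∀ x y z : E, ip x (y - z) = ip x y - ip x z := fun x y z => by
    rw [← h_star (y - z) x, ip_sub_left, star_sub, h_star, h_star]
  have hnorm_sq : ∀ f : E, ‖ip f f‖ = ‖f‖ * ‖f‖ := fun f => by
    rw [h_norm]
    exact (Real.mul_self_sqrt (norm_nonneg _)).symm
  -- ‖a • x‖ ≤ ‖a‖ * ‖x‖
  have norm_smul_le' : ∀ (a : A) (x : E), ‖a • x‖ ≤ ‖a‖ * ‖x‖ := by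
    intro a x
    have h1 : ip (a • x) (a • x) = a * (ip x x * star a) := by
      rw [h_smul, ip_smul_right]
    calc ‖a • x‖ = Real.sqrt ‖a * (ip x x * star a)‖ := by rw [h_norm, h1]
      _ ≤ Real.sqrt (‖a‖ * (‖ip x x‖ * ‖a‖)) := by
          apply Real.sqrt_le_sqrt
          calc ‖a * (ip x x * star a)‖ ≤ ‖a‖ * ‖ip x x * star a‖ := norm_mul_le _ _
            _ ≤ ‖a‖ * (‖ip x x‖ * ‖star a‖) := by
                gcongr; exact norm_mul_le _ _
            _ = ‖a‖ * (‖ip x x‖ * ‖a‖) := by rw [norm_star]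
      _ = ‖a‖ * ‖x‖ := by
          rw [show ‖a‖ * (‖ip x x‖ * ‖a‖) = ‖a‖ ^ 2 * ‖ip x x‖ by ring,
            Real.sqrt_mul (sq_nonneg _), Real.sqrt_sq (norm_nonneg _), h_norm]
  -- Cauchy-Schwarz
  have cs : ∀ f x : E, ‖ip f x‖ ≤ ‖f‖ * ‖x‖ := by
    intro f x
    by_cases hx : x = 0
    · rw [hx, ip_zero_right, norm_zero]; positivity
    · set r : ℝ := ‖ip x x‖ with hr
      have hr0 : 0 < r := by
        rw [hr, norm_pos_iff]
        exact fun h0 => hx (h_def x h0)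
      set a : A := ip f x with ha
      set c : A := (r : ℂ) • (1 : A) with hc
      have hc_star : star c = c := by
        rw [hc, aux_star_smul, star_one, Complex.conj_ofReal]
      have hc_mul : ∀ y : A, c * y = r • y := fun y => by
        rw [hc, smul_mul_assoc, one_mul, Complex.coe_smul]
      have hc_mul' : ∀ y : A, y * c = r • y := fun y => by
        rw [hc, Algebra.mul_smul_comm, mul_one, Complex.coe_smul]
      have hstar_a : ip x f = star a := by rw [ha, h_star]
      set z : E := c • f - a • x with hz
      have e_fz : ip f z = ip f f * c - a * star a := by
        rw [hz, ip_sub_right, ip_smul_right, ip_smul_right, hc_star, ← ha]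
      have e_xz : ip x z = star a * c - ip x x * star a := by
        rw [hz, ip_sub_right, ip_smul_right, ip_smul_right, hc_star, hstar_a]
      have hzz : ip z z =
          (r * r) • ip f f - r • (a * star a) - r • (a * star a) + a * (ip x x * star a) := by
        have e_zz : ip z z
            = c * (ip f f * c - a * star a) - a * (star a * c - ip x x * star a) := by
          rw [hz, ip_sub_left, h_smul, h_smul, ← hz, e_fz, e_xz]
        rw [e_zz, mul_sub, mul_sub, hc_mul', hc_mul', mul_smul_comm, mul_smul_comm,
          hc_mul, hc_mul, smul_smul]
        abel
      have h2 : a * (ip x x * star a) ≤ r • (a * star a) := by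
        have := CStarAlgebra.star_right_conjugate_le_norm_smul (a := a) (b := ip x x) (h_star x x)
        rwa [← hr, mul_assoc] at this
      have h3 : (0 : A) ≤ (r * r) • ip f f - r • (a * star a) := by
        have h4 := (h_pos z)
        rw [hzz] at h4
        have h5 := add_le_add_right h2 ((r * r) • ip f f - r • (a * star a) - r • (a * star a))
        have h6 : (r * r) • ip f f - r • (a * star a) - r • (a * star a) + r • (a * star a)
            = (r * r) • ip f f - r • (a * star a) := by abel
        rw [h6] at h5
        exact le_trans h4 h5
      have key : r • (a * star a) ≤ (r * r) • ip f f := sub_nonneg.mp h3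
      have hnn : (0 : A) ≤ r • (a * star a) := by
        have hb : r • (a * star a) = (Real.sqrt r • a) * star (Real.sqrt r • a) := by
          rw [aux_star_real_smul, smul_mul_assoc, mul_smul_comm, smul_smul,
            Real.mul_self_sqrt hr0.le]
        rw [hb]
        exact mul_star_self_nonneg _
      have h5 := CStarAlgebra.norm_le_norm_of_nonneg_of_le hnn key
      rw [norm_smul, norm_smul, Real.norm_of_nonneg hr0.le,
        Real.norm_of_nonneg (by positivity : (0:ℝ) ≤ r * r),
        CStarRing.norm_self_mul_star, hnorm_sq] at h5
      have h7 : ‖a‖ * ‖a‖ ≤ r * (‖f‖ * ‖f‖) := by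
        have := (mul_le_mul_iff_right₀ hr0).mp (by linarith : r * (‖a‖ * ‖a‖) ≤ r * (r * (‖f‖ * ‖f‖)))
        exact this
      have h8 : r = ‖x‖ * ‖x‖ := by rw [hr, hnorm_sq]
      nlinarith [norm_nonneg a, norm_nonneg f, norm_nonneg x, mul_nonneg (norm_nonneg f) (norm_nonneg x)]

  -- norms of frame vectors
  have hM0 : 0 ≤ M := hM ▸ Real.iSup_nonneg (fun j => norm_nonneg _)
  have h2M1 : (0:ℝ) < 2 * M + 1 := by linarith
  have hMj : ∀ j, ‖g j‖ ≤ M := fun j =>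
    hM ▸ le_ciSup (f := fun j : Fin n => ‖g j‖) (Set.Finite.bddAbove (Set.finite_range _)) j
  have hg'le : ∀ j, ‖g' j‖ ≤ M + 1 := by
    intro j
    calc ‖g' j‖ = ‖g j - (g j - g' j)‖ := by rw [sub_sub_cancel]
      _ ≤ ‖g j‖ + ‖g j - g' j‖ := norm_sub_le _ _
      _ ≤ M + 1 := add_le_add (hMj j) ((h_close j).le.trans (min_le_left _ _))
  set T : E → E := fun f => ∑ j, ip f (g' j) • g' j with hT
  have T_add : ∀ x y : E, T (x + y) = T x + T y := by
    intro x y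
    rw [hT]
    simp only [h_add, add_smul, Finset.sum_add_distrib]
  have T_sub : ∀ x y : E, T (x - y) = T x - T y := by
    intro x y
    have h1 := T_add (x - y) y
    rw [sub_add_cancel] at h1
    rw [h1]; abel
  set d : Fin n → ℝ := fun j => ‖g j - g' j‖ with hd
  set ε : ℝ := (2 * M + 1) * ∑ j, d j with hε
  have hε0 : 0 ≤ ε := by
    apply mul_nonneg h2M1.le
    exact Finset.sum_nonneg fun j _ => norm_nonneg _
  have key_est : ∀ f : E, ‖T f - f‖ ≤ ε * ‖f‖ := by
    intro f
    have h1 : T f - f = ∑ j, (ip f (g' j) • g' j - ip f (g j) • g j) := by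
      rw [Finset.sum_sub_distrib, hT, h_parseval]
    rw [h1]
    calc ‖∑ j, (ip f (g' j) • g' j - ip f (g j) • g j)‖
        ≤ ∑ j, ‖ip f (g' j) • g' j - ip f (g j) • g j‖ := norm_sum_le _ _
      _ ≤ ∑ j, (2 * M + 1) * d j * ‖f‖ := by
          apply Finset.sum_le_sum
          intro j _
          have hsplit : ip f (g' j) • g' j - ip f (g j) • g j
              = ip f (g' j) • (g' j - g j) + ip f (g' j - g j) • g j := by
            rw [smul_sub, ip_sub_right, sub_smul]
            abel
          have hd1 : ‖g' j - g j‖ = d j := by rw [hd, norm_sub_rev]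
          calc ‖ip f (g' j) • g' j - ip f (g j) • g j‖
              ≤ ‖ip f (g' j) • (g' j - g j)‖ + ‖ip f (g' j - g j) • g j‖ := by
                rw [hsplit]; exact norm_add_le _ _
            _ ≤ ‖ip f (g' j)‖ * ‖g' j - g j‖ + ‖ip f (g' j - g j)‖ * ‖g j‖ :=
                add_le_add (norm_smul_le' _ _) (norm_smul_le' _ _)
            _ ≤ (‖f‖ * (M + 1)) * d j + (‖f‖ * d j) * M := by
                apply add_le_add
                · rw [hd1]
                  apply mul_le_mul _ le_rfl (norm_nonneg _)
                    (by positivity)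
                  exact (cs f (g' j)).trans (by
                    have := hg'le j
                    nlinarith [norm_nonneg f, norm_nonneg (g' j)])
                · apply mul_le_mul _ (hMj j) (norm_nonneg _) (by positivity)
                  exact (cs f (g' j - g j)).trans (by rw [hd1])
            _ = (2 * M + 1) * d j * ‖f‖ := by ring
      _ = ε * ‖f‖ := by rw [hε, Finset.mul_sum, Finset.sum_mul]
  have hε1 : ε < 1 := by
    rcases Nat.eq_zero_or_pos n with h0 | h0
    · subst h0
      simp [hε]
    · have hne : (Finset.univ : Finset (Fin n)).Nonempty := by
        rw [Finset.univ_nonempty_iff]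
        exact ⟨⟨0, h0⟩⟩
      have hn0 : (n : ℝ) ≠ 0 := Nat.cast_ne_zero.mpr h0.ne'
      have hsum : ∑ j, d j < ((2 * M + 1) : ℝ)⁻¹ := by
        calc ∑ j, d j < ∑ _j : Fin n, (((2 * M + 1) * n)⁻¹ : ℝ) :=
              Finset.sum_lt_sum_of_nonempty hne fun j _ =>
                lt_of_lt_of_le (h_close j) (min_le_right _ _)
          _ = n * ((2 * M + 1) * n)⁻¹ := by
              rw [Finset.sum_const, Finset.card_univ, Fintype.card_fin, nsmul_eq_mul]
          _ = (2 * M + 1)⁻¹ := by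
              field_simp
      calc ε < (2 * M + 1) * (2 * M + 1)⁻¹ := by
            rw [hε]
            exact mul_lt_mul_of_pos_left hsum h2M1
        _ = 1 := mul_inv_cancel₀ h2M1.ne'
  have T_inj : Function.Injective T := by
    intro x y hxy
    have hu : T (x - y) = 0 := by rw [T_sub, hxy, sub_self]
    have h1 := key_est (x - y)
    rw [hu, zero_sub, norm_neg] at h1
    have h2 : ‖x - y‖ = 0 := by nlinarith [norm_nonneg (x - y)]
    have := norm_eq_zero.mp h2
    exact sub_eq_zero.mp this
  have T_surj : Function.Surjective T := by
    intro y
    set Φ : E → E := fun f => y + (f - T f) with hΦ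
    have lip : LipschitzWith ⟨ε, hε0⟩ Φ := by
      apply LipschitzWith.of_dist_le_mul
      intro p q
      rw [dist_eq_norm, dist_eq_norm]
      have h1 : Φ p - Φ q = -(T (p - q) - (p - q)) := by
        rw [hΦ]
        simp only
        rw [T_sub]
        abel
      rw [h1, norm_neg]
      exact key_est (p - q)
    have hC : ContractingWith ⟨ε, hε0⟩ Φ := ⟨by exact_mod_cast hε1, lip⟩
    haveI : Nonempty E := ⟨0⟩
    set f := hC.fixedPoint with hf
    have hfix : Φ f = f := hC.fixedPoint_isFixedPt
    refine ⟨f, ?_⟩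
    have h2 : T f + (f - T f) = f := by abel
    have h3 : y + (f - T f) = f := hfix
    exact (add_right_cancel (h3.trans h2.symm)).symm
  refine ⟨⟨T_inj, T_surj⟩, ?_⟩
  intro f
  obtain ⟨h, hh⟩ := T_surj f
  exact ⟨fun j => ip h (g' j), hh.symm⟩
end

section
/- Let A be a unital C*-algebra and E a Hilbert A-module. A finite set {g₁,…,gₙ} ⊆ E is a generating set for E (i.e., its A-span is all of E) if and only if the associated frame operator S : E → E, Sf = ∑_{j=1}^n ⟨f,g_j⟩g_j, is invertible in the C*-algebra of adjointable operators L_A(E). -/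
open scoped ComplexOrder



theorem aux_starI {A : Type*}
    [NormedRing A] [StarRing A] [CStarRing A]
    [NormedAlgebra ℂ A] [CompleteSpace A] [PartialOrder A] [StarOrderedRing A] :
    star ((algebraMap ℂ A) Complex.I) = -((algebraMap ℂ A) Complex.I) := by
  set u : A := (algebraMap ℂ A) Complex.I with hu
  set v : A := star u with hv
  have hcu : ∀ b : A, u * b = b * u := fun b => Algebra.commutes Complex.I b
  have hcv : ∀ b : A, v * b = b * v := by
    intro b
    calc v * b = star (star b * u) := by rw [star_mul, star_star]
    _ = star (u * star b) := by rw [hcu]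
    _ = b * v := by rw [star_mul, star_star]
  have hu2 : u * u = -1 := by
    rw [hu, ← map_mul, Complex.I_mul_I, map_neg, map_one]
  have hv2 : v * v = -1 := by
    rw [hv, ← star_mul, hu2, star_neg, star_one]
  set p : A := u * v with hp
  have hpsa : star p = p := by rw [hp, star_mul, star_star]
  have hcp : ∀ b : A, p * b = b * p := by
    intro b; rw [hp, mul_assoc, hcv b, ← mul_assoc, hcu b, mul_assoc]
  have hp2 : p * p = 1 := by
    calc p * p = u * (v * u) * v := by rw [hp]; noncomm_ring
    _ = u * (u * v) * v := by rw [hcv u]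
    _ = (u * u) * (v * v) := by noncomm_ring
    _ = 1 := by rw [hu2, hv2]; noncomm_ring
  have hppos : (0 : A) ≤ p := mul_star_self_nonneg u
  set x : A := 1 - p with hx
  have hxp : p * x = -x := by rw [hx, mul_sub, mul_one, ← hp2]; noncomm_ring
  have hx2 : x * x = x + x := by rw [hx, sub_mul, mul_sub, mul_sub, hp2]; noncomm_ring
  have hxsa : star x = x := by rw [hx, star_sub, star_one, hpsa]
  have h1 : (0:A) ≤ x + x := by
    rw [← hx2]; nth_rewrite 1 [← hxsa]; exact star_mul_self_nonneg x
  have h2 : x + x ≤ 0 := by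
    have hc : (0:A) ≤ star x * p * x := star_left_conjugate_nonneg hppos x
    have hxx : star x * p * x = -(x + x) := by
      rw [hxsa, show x * p * x = p * (x * x) from by rw [← hcp x, mul_assoc], hx2,
        mul_add, hxp]
      abel
    rw [hxx] at hc
    exact neg_nonneg.mp hc
  have hx0 : x = 0 := by
    have h3 : x + x = 0 := le_antisymm h2 h1
    have h4 : (2 : ℂ) • x = 0 := by rw [two_smul]; exact h3
    have h5 : ((2 : ℂ))⁻¹ • ((2:ℂ) • x) = x := by
      rw [smul_smul, inv_mul_cancel₀ (by norm_num), one_smul]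
    rw [h4, smul_zero] at h5; exact h5.symm
  have hp1 : p = 1 := by
    have h6 := hx0; rw [hx] at h6; exact (sub_eq_zero.mp h6).symm
  -- u * (v + u) = 0 and u * (-u) = 1
  have huvu : u * (v + u) = 0 := by rw [mul_add, ← hp, hp1, hu2]; simp
  have huinv : (-u) * u = 1 := by rw [neg_mul, hu2, neg_neg]
  have : v + u = 0 := by
    calc v + u = ((-u) * u) * (v + u) := by rw [huinv, one_mul]
    _ = (-u) * (u * (v + u)) := by rw [mul_assoc]
    _ = 0 := by rw [huvu, mul_zero]
  show v = -u
  exact eq_neg_of_add_eq_zero_left this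

theorem aux_starModule {A : Type*}
    [NormedRing A] [StarRing A] [CStarRing A]
    [NormedAlgebra ℂ A] [CompleteSpace A] [PartialOrder A] [StarOrderedRing A] :
    StarModule ℂ A := by
  -- step 1: `star` fixes real scalars
  let ψ₁ : ℝ →+* A :=
    { toFun := fun r => star ((algebraMap ℝ A) r)
      map_one' := by simp
      map_mul' := fun r s => by
        show star ((algebraMap ℝ A) (r * s)) = _
        rw [← star_mul, ← map_mul, mul_comm s r]
      map_zero' := by simp
      map_add' := fun r s => by
        show star ((algebraMap ℝ A) (r + s)) = _
        rw [map_add, star_add] }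
  have hψcont : Continuous ψ₁ := continuous_star.comp (continuous_algebraMap ℝ A)
  have hrat : ∀ q : ℚ, ψ₁ (q : ℝ) = (algebraMap ℝ A) (q : ℝ) := by
    intro q
    have h1 : ψ₁.comp (Rat.castHom ℝ) = (algebraMap ℝ A).comp (Rat.castHom ℝ) :=
      Subsingleton.elim _ _
    exact congrFun (congrArg (fun f : ℚ →+* A => (f : ℚ → A)) h1) q
  have hre : ∀ r : ℝ, star ((algebraMap ℝ A) r) = (algebraMap ℝ A) r := by
    intro r
    have := Continuous.ext_on Rat.denseRange_cast hψcont (continuous_algebraMap ℝ A)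
      (fun x hx => by obtain ⟨q, rfl⟩ := hx; exact hrat q)
    exact congrFun this r
  have hreC : ∀ r : ℝ, star ((algebraMap ℂ A) (r : ℂ)) = (algebraMap ℂ A) (r : ℂ) := by
    intro r
    have : (algebraMap ℂ A) ((r : ℂ)) = (algebraMap ℝ A) r := by
      rw [show ((r : ℂ)) = algebraMap ℝ ℂ r from rfl, ← IsScalarTower.algebraMap_apply]
    rw [this]; exact hre r
  have hstarmap : ∀ z : ℂ, star ((algebraMap ℂ A) z) = (algebraMap ℂ A) (star z) := by
    intro z
    have hz : z = (z.re : ℂ) + (z.im : ℂ) * Complex.I := (Complex.re_add_im z).symm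
    have hsz : (star z : ℂ) = (z.re : ℂ) - (z.im : ℂ) * Complex.I := by
      rw [Complex.star_def]
      exact Complex.ext (by simp) (by simp)
    calc star ((algebraMap ℂ A) z)
        = star ((algebraMap ℂ A) ((z.re : ℂ)) +
            (algebraMap ℂ A) ((z.im : ℂ)) * (algebraMap ℂ A) Complex.I) := by
          rw [← map_mul, ← map_add, ← hz]
      _ = (algebraMap ℂ A) ((z.re : ℂ)) +
            star ((algebraMap ℂ A) Complex.I) * star ((algebraMap ℂ A) ((z.im : ℂ))) := by
          rw [star_add, star_mul, hreC]
      _ = (algebraMap ℂ A) ((z.re : ℂ)) -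
            (algebraMap ℂ A) Complex.I * (algebraMap ℂ A) ((z.im : ℂ)) := by
          rw [aux_starI, hreC]; noncomm_ring
      _ = (algebraMap ℂ A) (star z) := by
          rw [hsz, map_sub, map_mul,
            show (algebraMap ℂ A) Complex.I * (algebraMap ℂ A) ((z.im:ℂ))
              = (algebraMap ℂ A) ((z.im:ℂ)) * (algebraMap ℂ A) Complex.I from
              Algebra.commutes Complex.I _]
  constructor
  intro z a
  rw [Algebra.smul_def, star_mul, hstarmap, ← Algebra.commutes (star z) (star a),
    ← Algebra.smul_def]



theorem aux_cs_fam {A : Type*}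
    [NormedRing A] [StarRing A] [CStarRing A]
    [NormedAlgebra ℂ A] [CompleteSpace A] [PartialOrder A] [StarOrderedRing A]
    [StarModule ℂ A] {n : ℕ} (c x : Fin n → A) :
    star (∑ j, c j * star (x j)) * (∑ j, c j * star (x j)) ≤
      ‖∑ j, c j * star (c j)‖ • (∑ j, x j * star (x j)) := by
  letI : CStarAlgebra A := { }
  have hsmulR : ∀ (r : ℝ) (a : A), star (r • a) = r • star a := fun r a => by
    rw [← Complex.coe_smul, star_smul, Complex.star_def, Complex.conj_ofReal, Complex.coe_smul]
  obtain ⟨z, hz⟩ : ∃ z : A, z = ∑ j, c j * star (x j) := ⟨_, rfl⟩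
  obtain ⟨G, hG⟩ : ∃ G : A, G = ∑ j, c j * star (c j) := ⟨_, rfl⟩
  obtain ⟨H, hH⟩ : ∃ H : A, H = ∑ j, x j * star (x j) := ⟨_, rfl⟩
  rw [← hz, ← hG, ← hH]
  set K : ℝ := ‖G‖ with hK
  have hHpos : (0:A) ≤ H := by
    rw [hH]; exact Finset.sum_nonneg fun j _ => mul_star_self_nonneg _
  have hGsa : IsSelfAdjoint G := by
    rw [IsSelfAdjoint, hG, star_sum]
    exact Finset.sum_congr rfl fun j _ => by rw [star_mul, star_star]
  have hzstar : star z = ∑ j, x j * star (c j) := by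
    rw [hz, star_sum]
    exact Finset.sum_congr rfl fun j _ => by rw [star_mul, star_star]
  rcases eq_or_lt_of_le (norm_nonneg G) with hK0 | hKpos
  · -- G = 0, so all c j = 0, z = 0
    have hG0 : G = 0 := by rwa [eq_comm, norm_eq_zero] at hK0
    have hc0 : ∀ j : Fin n, c j = 0 := by
      intro j
      have h := (Finset.sum_eq_zero_iff_of_nonneg
        (fun j _ => mul_star_self_nonneg (c j))).mp (hG ▸ hG0) j (Finset.mem_univ j)
      have : ‖c j‖ * ‖c j‖ = 0 := by rw [← CStarRing.norm_self_mul_star, h, norm_zero]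
      have : ‖c j‖ = 0 := by nlinarith [norm_nonneg (c j)]
      exact norm_eq_zero.mp this
    have hz0 : z = 0 := by
      rw [hz]; exact Finset.sum_eq_zero fun j _ => by rw [hc0 j, zero_mul]
    rw [hz0, star_zero, zero_mul]
    exact smul_nonneg (norm_nonneg G) hHpos
  · -- main case
    obtain ⟨T1, hT1⟩ : ∃ T1 : A, T1 = star z * G * z := ⟨_, rfl⟩
    obtain ⟨T2, hT2⟩ : ∃ T2 : A, T2 = star z * z := ⟨_, rfl⟩
    have h0 : (0:A) ≤ T1 - K • T2 - K • T2 + (K * K) • H := by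
      have hsum : (0:A) ≤ ∑ j, star (star (c j) * z - K • star (x j)) *
          (star (c j) * z - K • star (x j)) :=
        Finset.sum_nonneg fun j _ => star_mul_self_nonneg _
      have hexp : ∀ j : Fin n, star (star (c j) * z - K • star (x j)) *
          (star (c j) * z - K • star (x j)) =
          star z * (c j * star (c j)) * z - K • (star z * (c j * star (x j)))
            - K • ((x j * star (c j)) * z) + (K * K) • (x j * star (x j)) := by
        intro j
        rw [star_sub, star_mul, star_star, hsmulR, star_star]
        rw [sub_mul, mul_sub, mul_sub]
        rw [smul_mul_assoc, mul_smul_comm, mul_smul_comm, smul_mul_assoc, smul_smul]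
        have e1 : star z * c j * (star (c j) * z) = star z * (c j * star (c j)) * z := by
          noncomm_ring
        have e2 : star z * c j * star (x j) = star z * (c j * star (x j)) := by noncomm_ring
        have e3 : x j * (star (c j) * z) = x j * star (c j) * z := by noncomm_ring
        rw [e1, e2, e3]
        abel
      have hA1 : ∑ j, star z * (c j * star (c j)) * z = T1 := by
        rw [hT1, hG, Finset.mul_sum Finset.univ (fun j => c j * star (c j)) (star z),
          Finset.sum_mul]
      have hA2 : ∑ j, star z * (c j * star (x j)) = T2 := by
        rw [hT2]
        nth_rewrite 3 [hz]
        rw [Finset.mul_sum Finset.univ (fun j => c j * star (x j)) (star z)]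
      have hA3 : ∑ j, x j * star (c j) * z = T2 := by
        rw [hT2, hzstar, Finset.sum_mul]
      rw [Finset.sum_congr rfl (fun j _ => hexp j)] at hsum
      rw [Finset.sum_add_distrib, Finset.sum_sub_distrib, Finset.sum_sub_distrib,
        ← Finset.smul_sum, ← Finset.smul_sum, ← Finset.smul_sum] at hsum
      rw [hA1, hA2, hA3, ← hH] at hsum
      exact hsum
    have hT1le : T1 ≤ K • T2 := by
      rw [hT1, hT2, hK]
      exact CStarAlgebra.star_left_conjugate_le_norm_smul hGsa
    have h1 : (0:A) ≤ (K * K) • H - K • T2 := by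
      have step : T1 - K • T2 - K • T2 + (K * K) • H ≤
          K • T2 - K • T2 - K • T2 + (K * K) • H := by
        have := sub_le_sub_right (sub_le_sub_right hT1le (K • T2)) (K • T2)
        exact add_le_add_left this _
      have heq : K • T2 - K • T2 - K • T2 + (K * K) • H = (K * K) • H - K • T2 := by abel
      rw [heq] at step
      exact le_trans h0 step
    have h2 : (0:A) ≤ K • (K • H - T2) := by
      rw [smul_sub, smul_smul]
      exact h1
    have h3 : (0:A) ≤ K • H - T2 := by
      have := smul_nonneg (le_of_lt (inv_pos.mpr hKpos)) h2
      rwa [smul_smul, inv_mul_cancel₀ (ne_of_gt hKpos), one_smul] at this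
    rw [← hT2]
    exact sub_nonneg.mp h3



theorem aux_cs_ip {A E : Type*}
    [NormedRing A] [StarRing A] [CStarRing A]
    [NormedAlgebra ℂ A] [CompleteSpace A] [PartialOrder A] [StarOrderedRing A]
    [StarModule ℂ A] [AddCommGroup E] [Module A E]
    (ip : E → E → A)
    (h_add : ∀ f g h : E, ip (f + g) h = ip f h + ip g h)
    (h_smul : ∀ (c : A) (f g : E), ip (c • f) g = c * ip f g)
    (h_star : ∀ f g : E, star (ip f g) = ip g f)
    (h_pos : ∀ f : E, 0 ≤ ip f f)
    (h_def : ∀ f : E, ip f f = 0 → f = 0)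
    (f g : E) :
    star (ip f g) * ip f g ≤ ‖ip f f‖ • ip g g := by
  letI : CStarAlgebra A := { }
  have ip_zero_left : ∀ h : E, ip 0 h = 0 := fun h => by
    have := h_smul 0 h h; rwa [zero_smul, zero_mul] at this
  have ip_sub_left : ∀ f₁ f₂ h : E, ip (f₁ - f₂) h = ip f₁ h - ip f₂ h := by
    intro f₁ f₂ h
    have hneg : ip (-f₂) h = -(ip f₂ h) := by
      have := h_smul (-1) f₂ h; rwa [neg_one_smul, neg_one_mul] at this
    rw [sub_eq_add_neg, h_add, hneg, sub_eq_add_neg]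
  have ip_smul_right : ∀ (c : A) (f₁ h : E), ip f₁ (c • h) = ip f₁ h * star c := by
    intro c f₁ h
    rw [← h_star, h_smul, star_mul, h_star]
  have ip_sub_right : ∀ f₁ f₂ h : E, ip h (f₁ - f₂) = ip h f₁ - ip h f₂ := by
    intro f₁ f₂ h
    rw [← h_star, ip_sub_left, star_sub, h_star, h_star]
  set z : A := ip f g with hzdef
  set K : ℝ := ‖ip f f‖ with hK
  have hipffsa : IsSelfAdjoint (ip f f) := h_star f f
  have hipggsa : IsSelfAdjoint (ip g g) := h_star g g
  rcases eq_or_lt_of_le (norm_nonneg (ip f f)) with hK0 | hKpos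
  · have hff : ip f f = 0 := by rwa [eq_comm, norm_eq_zero] at hK0
    have hf0 : f = 0 := h_def f hff
    have hz0 : z = 0 := by rw [hzdef, hf0, ip_zero_left]
    rw [hz0, star_zero, zero_mul]
    exact smul_nonneg (norm_nonneg _) (h_pos g)
  · set d : A := algebraMap ℝ A K with hd
    have hdsa : star d = d := by
      rw [hd, Algebra.algebraMap_eq_smul_one]
      rw [show ((K : ℝ) • (1:A)) = ((K:ℂ)) • (1:A) from (Complex.coe_smul K (1:A)).symm]
      rw [star_smul, star_one, Complex.star_def, Complex.conj_ofReal, Complex.coe_smul]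
    have hdmul : ∀ a : A, d * a = K • a := fun a => by
      rw [hd, ← Algebra.smul_def, ← Complex.coe_smul, Complex.coe_smul]
    have hmuld : ∀ a : A, a * d = K • a := fun a => by
      rw [hd, ← Algebra.commutes, ← Algebra.smul_def, ← Complex.coe_smul, Complex.coe_smul]
    have h0 : (0:A) ≤ ip (star z • f - d • g) (star z • f - d • g) := h_pos _
    have hexp : ip (star z • f - d • g) (star z • f - d • g) =
        star z * ip f f * z - K • (star z * z) - K • (star z * z) + (K * K) • ip g g := by
      rw [ip_sub_left, ip_sub_right, ip_sub_right]
      rw [h_smul, h_smul, ip_smul_right, ip_smul_right, h_smul, ip_smul_right, h_smul,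
        ip_smul_right]
      rw [star_star, hdsa]
      have e1 : star z * (ip f g * d) = K • (star z * z) := by
        rw [hmuld, mul_smul_comm, ← hzdef]
      have e2 : d * (ip g f * z) = K • (star z * z) := by
        rw [hdmul, ← h_star, ← hzdef]
      have e3 : d * (ip g g * d) = (K * K) • ip g g := by
        rw [hmuld, hdmul, smul_smul]
      rw [e1, e2, e3,
        show star z * (ip f f * z) = star z * ip f f * z from by noncomm_ring]
      abel
    rw [hexp] at h0
    have hT1le : star z * ip f f * z ≤ K • (star z * z) := by
      rw [hK]; exact CStarAlgebra.star_left_conjugate_le_norm_smul hipffsa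
    have h1 : (0:A) ≤ (K * K) • ip g g - K • (star z * z) := by
      have step := add_le_add_left
        (sub_le_sub_right (sub_le_sub_right hT1le (K • (star z * z))) (K • (star z * z)))
        ((K * K) • ip g g)
      have heq : K • (star z * z) - K • (star z * z) - K • (star z * z) + (K * K) • ip g g
          = (K * K) • ip g g - K • (star z * z) := by abel
      rw [heq] at step
      exact le_trans h0 step
    have h2 : (0:A) ≤ K • (K • ip g g - star z * z) := by rw [smul_sub, smul_smul]; exact h1
    have h3 : (0:A) ≤ K • ip g g - star z * z := by
      have := smul_nonneg (le_of_lt (inv_pos.mpr hKpos)) h2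
      rwa [smul_smul, inv_mul_cancel₀ (ne_of_gt hKpos), one_smul] at this
    exact sub_nonneg.mp h3



theorem aux_smul_coeff_mono {A : Type*}
    [NormedRing A] [StarRing A] [CStarRing A]
    [NormedAlgebra ℂ A] [CompleteSpace A] [PartialOrder A] [StarOrderedRing A]
    [StarModule ℂ A] {r s : ℝ} (h : r ≤ s) {a : A} (ha : 0 ≤ a) : r • a ≤ s • a := by
  letI : CStarAlgebra A := { }
  have h2 : (0:A) ≤ (s - r) • a := smul_nonneg (by linarith) ha
  rw [sub_smul] at h2
  exact sub_nonneg.mp h2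

set_option maxHeartbeats 2000000 in
/-- A finite set `{g₁, …, gₙ}` in a Hilbert `A`-module `E` is a generating set
(its `A`-span is all of `E`) if and only if the frame operator
`S f = ∑ⱼ ⟨f, gⱼ⟩·gⱼ` is invertible in the adjointable operators on `E`. -/
theorem generating_iff_frame_operator_invertible {A E : Type*}
    [NormedRing A] [StarRing A] [CStarRing A]
    [NormedAlgebra ℂ A] [CompleteSpace A] [PartialOrder A] [StarOrderedRing A]
    [NormedAddCommGroup E] [Module A E] [CompleteSpace E]
    (ip : E → E → A)
    (h_add : ∀ f g h : E, ip (f + g) h = ip f h + ip g h)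
    (h_smul : ∀ (c : A) (f g : E), ip (c • f) g = c * ip f g)
    (h_star : ∀ f g : E, star (ip f g) = ip g f)
    (h_pos : ∀ f : E, 0 ≤ ip f f)
    (h_def : ∀ f : E, ip f f = 0 → f = 0)
    (h_norm : ∀ f : E, ‖f‖ = Real.sqrt ‖ip f f‖)
    (n : ℕ) (g : Fin n → E) :
    (∀ f : E, ∃ c : Fin n → A, f = ∑ j, c j • g j) ↔
      Function.Bijective (fun f : E => ∑ j, ip f (g j) • g j) := by
  letI : StarModule ℂ A := aux_starModule
  letI : CStarAlgebra A := { }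
  -- basic inner product identities
  have ip_zero_left : ∀ h : E, ip 0 h = 0 := fun h => by
    have := h_smul 0 h h; rwa [zero_smul, zero_mul] at this
  have ip_zero_right : ∀ h : E, ip h 0 = 0 := fun h => by
    rw [← h_star, ip_zero_left, star_zero]
  have ip_sub_left : ∀ f₁ f₂ h : E, ip (f₁ - f₂) h = ip f₁ h - ip f₂ h := by
    intro f₁ f₂ h
    have hneg : ip (-f₂) h = -(ip f₂ h) := by
      have := h_smul (-1) f₂ h; rwa [neg_one_smul, neg_one_mul] at this
    rw [sub_eq_add_neg, h_add, hneg, sub_eq_add_neg]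
  have ip_add_right : ∀ f₁ f₂ h : E, ip h (f₁ + f₂) = ip h f₁ + ip h f₂ := by
    intro f₁ f₂ h
    rw [← h_star, h_add, star_add, h_star, h_star]
  have ip_sub_right : ∀ f₁ f₂ h : E, ip h (f₁ - f₂) = ip h f₁ - ip h f₂ := by
    intro f₁ f₂ h
    rw [← h_star, ip_sub_left, star_sub, h_star, h_star]
  have ip_smul_right : ∀ (c : A) (f₁ h : E), ip f₁ (c • h) = ip f₁ h * star c := by
    intro c f₁ h
    rw [← h_star, h_smul, star_mul, h_star]
  have ip_sum_left : ∀ (v : Fin n → E) (h : E),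
      ip (∑ j, v j) h = ∑ j, ip (v j) h := fun v h =>
    map_sum (AddMonoidHom.mk' (fun x => ip x h) (fun a b => h_add a b h)) v Finset.univ
  have ip_sum_right : ∀ (v : Fin n → E) (h : E),
      ip h (∑ j, v j) = ∑ j, ip h (v j) := by
    intro v h
    rw [← h_star, ip_sum_left, star_sum]
    exact Finset.sum_congr rfl fun j _ => h_star _ _
  have norm_sq : ∀ f : E, ‖ip f f‖ = ‖f‖ ^ 2 := by
    intro f
    rw [h_norm f, Real.sq_sqrt (norm_nonneg _)]
  -- scalar Cauchy-Schwarz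
  have csE : ∀ f h : E, ‖ip f h‖ ≤ ‖f‖ * ‖h‖ := by
    intro f h
    have h1 := aux_cs_ip ip h_add h_smul h_star h_pos h_def f h
    have h2 : ‖star (ip f h) * ip f h‖ ≤ ‖(‖ip f f‖ • ip h h)‖ :=
      CStarAlgebra.norm_le_norm_of_nonneg_of_le (star_mul_self_nonneg _) h1
    rw [CStarRing.norm_star_mul_self] at h2
    rw [norm_smul, Real.norm_of_nonneg (norm_nonneg _), norm_sq, norm_sq] at h2
    have h3 : ‖ip f h‖ * ‖ip f h‖ ≤ (‖f‖ * ‖h‖) * (‖f‖ * ‖h‖) := by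
      calc ‖ip f h‖ * ‖ip f h‖ ≤ ‖f‖ ^ 2 * ‖h‖ ^ 2 := h2
      _ = (‖f‖ * ‖h‖) * (‖f‖ * ‖h‖) := by ring
    nlinarith [norm_nonneg (ip f h), mul_nonneg (norm_nonneg f) (norm_nonneg h)]
  -- norm bound for A-scalar multiplication on E
  have normsmulA : ∀ (c : A) (f : E), ‖c • f‖ ≤ ‖c‖ * ‖f‖ := by
    intro c f
    have h1 : ip (c • f) (c • f) = c * (ip f f * star c) := by
      rw [h_smul, ip_smul_right]
    have h2 : ‖ip (c • f) (c • f)‖ ≤ (‖c‖ * ‖f‖) ^ 2 := by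
      rw [h1]
      calc ‖c * (ip f f * star c)‖ ≤ ‖c‖ * (‖ip f f‖ * ‖star c‖) :=
        le_trans (norm_mul_le _ _) (by gcongr; exact norm_mul_le _ _)
      _ = ‖c‖ * (‖f‖ ^ 2 * ‖c‖) := by rw [norm_sq, norm_star]
      _ = (‖c‖ * ‖f‖) ^ 2 := by ring
    rw [h_norm]
    calc Real.sqrt ‖ip (c • f) (c • f)‖ ≤ Real.sqrt ((‖c‖ * ‖f‖) ^ 2) :=
      Real.sqrt_le_sqrt h2
    _ = ‖c‖ * ‖f‖ := Real.sqrt_sq (by positivity)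
  constructor
  · -- hard direction
    intro hgen
    rcases subsingleton_or_nontrivial E with hE | hE
    · exact ⟨fun a b _ => Subsingleton.elim a b, fun f => ⟨f, Subsingleton.elim _ _⟩⟩
    obtain ⟨e₁, e₂, hne⟩ := exists_pair_ne E
    haveI hA : Nontrivial A := by
      by_contra hcon
      rw [not_nontrivial_iff_subsingleton] at hcon
      exact hne (by rw [h_def e₁ (Subsingleton.elim _ _), h_def e₂ (Subsingleton.elim _ _)])
    have hn : n ≠ 0 := by
      intro hn0
      subst hn0
      obtain ⟨c, hc⟩ := hgen e₁
      obtain ⟨c', hc'⟩ := hgen e₂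
      simp only [Finset.univ_eq_empty, Finset.sum_empty] at hc hc'
      exact hne (hc.trans hc'.symm)
    letI : Module ℂ E := Module.compHom E (algebraMap ℂ A : ℂ →+* A)
    have smulCE : ∀ (z : ℂ) (f : E), z • f = (algebraMap ℂ A z) • f := fun _ _ => rfl
    letI : NormedSpace ℂ E := ⟨fun z f => by
      rw [smulCE]
      refine le_trans (normsmulA _ _) ?_
      rw [norm_algebraMap']⟩
    -- the frame operator as a continuous linear map
    let Slin : E →ₗ[ℂ] E :=
      { toFun := fun f => ∑ j, ip f (g j) • g j
        map_add' := fun f₁ f₂ => by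
          simp only [h_add, add_smul, Finset.sum_add_distrib]
        map_smul' := fun z f => by
          simp only [RingHom.id_apply]
          rw [smulCE, smulCE]
          calc ∑ j, ip ((algebraMap ℂ A z) • f) (g j) • g j
              = ∑ j, (algebraMap ℂ A z) • (ip f (g j) • g j) :=
                Finset.sum_congr rfl fun j _ => by rw [h_smul, mul_smul]
            _ = (algebraMap ℂ A z) • ∑ j, ip f (g j) • g j := Finset.smul_sum.symm }
    have Scont : ∀ f, ‖Slin f‖ ≤ (∑ j, ‖g j‖ * ‖g j‖) * ‖f‖ := by
      intro f
      calc ‖∑ j, ip f (g j) • g j‖ ≤ ∑ j, ‖ip f (g j) • g j‖ := norm_sum_le _ _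
      _ ≤ ∑ j, (‖g j‖ * ‖g j‖) * ‖f‖ := by
          refine Finset.sum_le_sum fun j _ => ?_
          calc ‖ip f (g j) • g j‖ ≤ ‖ip f (g j)‖ * ‖g j‖ := normsmulA _ _
          _ ≤ (‖f‖ * ‖g j‖) * ‖g j‖ := by gcongr; exact csE f (g j)
          _ = (‖g j‖ * ‖g j‖) * ‖f‖ := by ring
      _ = (∑ j, ‖g j‖ * ‖g j‖) * ‖f‖ := by rw [Finset.sum_mul]
    let S : E →L[ℂ] E := Slin.mkContinuous _ Scont
    have hSapp : ∀ f : E, S f = ∑ j, ip f (g j) • g j := fun f => rfl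
    -- the synthesis operator
    let Tlin : (Fin n → A) →ₗ[ℂ] E :=
      { toFun := fun c => ∑ j, c j • g j
        map_add' := fun c d => by
          simp only [Pi.add_apply, add_smul, Finset.sum_add_distrib]
        map_smul' := fun z c => by
          simp only [RingHom.id_apply]
          rw [smulCE]
          calc ∑ j, (z • c) j • g j
              = ∑ j, (algebraMap ℂ A z) • (c j • g j) :=
                Finset.sum_congr rfl fun j _ => by
                  rw [Pi.smul_apply, Algebra.smul_def, mul_smul]
            _ = (algebraMap ℂ A z) • ∑ j, c j • g j := Finset.smul_sum.symm }
    have Tcont : ∀ c, ‖Tlin c‖ ≤ (∑ j, ‖g j‖) * ‖c‖ := by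
      intro c
      calc ‖∑ j, c j • g j‖ ≤ ∑ j, ‖c j • g j‖ := norm_sum_le _ _
      _ ≤ ∑ j, ‖g j‖ * ‖c‖ := by
          refine Finset.sum_le_sum fun j _ => ?_
          calc ‖c j • g j‖ ≤ ‖c j‖ * ‖g j‖ := normsmulA _ _
          _ ≤ ‖c‖ * ‖g j‖ := by gcongr; exact norm_le_pi_norm c j
          _ = ‖g j‖ * ‖c‖ := by ring
      _ = (∑ j, ‖g j‖) * ‖c‖ := by rw [Finset.sum_mul]
    let T : (Fin n → A) →L[ℂ] E := Tlin.mkContinuous _ Tcont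
    have hTsurj : Function.Surjective T := by
      intro f
      obtain ⟨c, hc⟩ := hgen f
      exact ⟨c, hc.symm⟩
    obtain ⟨C, hC0, hC⟩ := T.exists_preimage_norm_le hTsurj
    -- constants
    set B : ℝ := (∑ j, ‖g j‖ * ‖g j‖) + 2 with hBdef
    have hB2 : 2 ≤ B := by
      have : 0 ≤ ∑ j, ‖g j‖ * ‖g j‖ :=
        Finset.sum_nonneg fun j _ => mul_nonneg (norm_nonneg _) (norm_nonneg _)
      simp only [hBdef]; linarith
    have hgB : ∀ j, ‖g j‖ * ‖g j‖ ≤ B := by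
      intro j
      have h1 : ‖g j‖ * ‖g j‖ ≤ ∑ j, ‖g j‖ * ‖g j‖ :=
        Finset.single_le_sum (fun j _ => mul_nonneg (norm_nonneg _) (norm_nonneg _))
          (Finset.mem_univ j)
      simp only [hBdef]; linarith
    set D : ℝ := (n : ℝ) * (C * C) + 1 with hDdef
    have hD1 : 1 ≤ D := by
      have : 0 ≤ (n : ℝ) * (C * C) := by positivity
      simp only [hDdef]; linarith
    have hn1 : 1 ≤ (n : ℝ) := by
      exact_mod_cast Nat.one_le_iff_ne_zero.mpr hn
    have hnB : 0 < (n : ℝ) * B := by nlinarith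
    set t : ℝ := ((n : ℝ) * B)⁻¹ with htdef
    have ht : 0 < t := inv_pos.mpr hnB
    have htnB : t * ((n : ℝ) * B) = 1 := inv_mul_cancel₀ (ne_of_gt hnB)
    set β : ℝ := t / D with hβdef
    have hβpos : 0 < β := div_pos ht (by linarith)
    have hβD : β * D = t := div_mul_cancel₀ t (by linarith)
    have hβhalf : β ≤ 1 / 2 := by
      have h1 : t ≤ 1 / 2 := by
        rw [htdef]
        rw [inv_le_comm₀ hnB (by norm_num)]
        nlinarith
      have h2 : β ≤ t := by
        rw [hβdef]
        calc t / D ≤ t / 1 := by apply div_le_div_of_nonneg_left (le_of_lt ht) one_pos hD1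
        _ = t := div_one t
      linarith
    -- pointwise contraction estimate
    have key : ∀ f : E, ‖f - (t : ℂ) • (S f)‖ ^ 2 ≤ (1 - β) * ‖f‖ ^ 2 := by
      intro f
      by_cases hf0 : f = 0
      · rw [hf0, map_zero, smul_zero, sub_zero, norm_zero]
        nlinarith
      have hNpos : 0 < ‖f‖ ^ 2 := pow_pos (norm_pos_iff.mpr hf0) 2
      set N : ℝ := ‖f‖ ^ 2 with hNdef
      obtain ⟨P, hPdef⟩ : ∃ P : A, P = ∑ j, ip f (g j) * star (ip f (g j)) := ⟨_, rfl⟩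
      obtain ⟨W, hWdef⟩ : ∃ W : A, W = ip (S f) (S f) := ⟨_, rfl⟩
      have hPpos : (0:A) ≤ P := by
        rw [hPdef]; exact Finset.sum_nonneg fun j _ => mul_star_self_nonneg _
      have haN : ‖ip f f‖ = N := norm_sq f
      have hasa : star (ip f f) = ip f f := h_star f f
      have hsa' : IsSelfAdjoint (ip f f) := h_star f f
      have hapos : (0:A) ≤ ip f f := h_pos f
      have hipSff : ip (S f) f = P := by
        rw [hSapp f, ip_sum_left, hPdef]
        exact Finset.sum_congr rfl fun j _ => by rw [h_smul, h_star]
      have hPsa : star P = P := by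
        rw [hPdef, star_sum]
        exact Finset.sum_congr rfl fun j _ => by rw [star_mul, star_star]
      have hipfSf : ip f (S f) = P := by rw [← h_star, hipSff, hPsa]
      -- upper bound for W
      have hdiag : ∀ j : Fin n, ip (ip f (g j) • g j) (ip f (g j) • g j) ≤
          B • (ip f (g j) * star (ip f (g j))) := by
        intro j
        have h1 : ip (ip f (g j) • g j) (ip f (g j) • g j)
            = ip f (g j) * ip (g j) (g j) * star (ip f (g j)) := by
          rw [h_smul, ip_smul_right]; noncomm_ring
        rw [h1]
        refine le_trans (CStarAlgebra.star_right_conjugate_le_norm_smul (h_star (g j) (g j))) ?_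
        refine aux_smul_coeff_mono ?_ (mul_star_self_nonneg _)
        rw [norm_sq, pow_two]
        exact hgB j
      obtain ⟨Sd, hSd⟩ : ∃ Sd : A,
        Sd = ∑ j, ip (ip f (g j) • g j) (ip f (g j) • g j) := ⟨_, rfl⟩
      obtain ⟨v, hv⟩ : ∃ v : Fin n → E, v = fun j => ip f (g j) • g j := ⟨_, rfl⟩
      have hvj : ∀ j, v j = ip f (g j) • g j := fun j => by rw [hv]
      have hSdv : Sd = ∑ j, ip (v j) (v j) := by
        rw [hSd]; exact Finset.sum_congr rfl fun j _ => by rw [hvj]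
      have hWsum : W = ∑ j, ∑ k, ip (v j) (v k) := by
        rw [hWdef, hSapp f]
        have h1 : (∑ j, ip f (g j) • g j) = ∑ j, v j := by
          exact Finset.sum_congr rfl fun j _ => (hvj j).symm
        rw [h1, ip_sum_left]
        exact Finset.sum_congr rfl fun j _ => by rw [ip_sum_right]
      have s1 : ∑ (_j : Fin n), ∑ k, ip (v k) (v k) = n • Sd := by
        rw [Finset.sum_const, Finset.card_univ, Fintype.card_fin, hSdv]
      have s2 : ∑ j : Fin n, ∑ (_k : Fin n), ip (v j) (v j) = n • Sd := by
        rw [Finset.sum_comm, s1]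
      have s4 : ∑ j, ∑ k, ip (v k) (v j) = W := by
        rw [Finset.sum_comm, ← hWsum]
      have hbig : ∑ j, ∑ k, (ip (v j) (v j) - ip (v j) (v k)
          - (ip (v k) (v j) - ip (v k) (v k)))
          = n • Sd - W - (W - n • Sd) := by
        simp only [Finset.sum_sub_distrib]
        rw [s2, s4, ← hWsum, s1]
      have h0' : (0:A) ≤ n • Sd - W - (W - n • Sd) := by
        rw [← hbig]
        refine Finset.sum_nonneg fun j _ => Finset.sum_nonneg fun k _ => ?_
        have := h_pos (v j - v k)
        rwa [ip_sub_left, ip_sub_right, ip_sub_right] at this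
      have hWnSd : W ≤ n • Sd := by
        have h1 : W + W ≤ n • Sd + n • Sd := by
          have h2 : (0:A) ≤ (n • Sd + n • Sd) - (W + W) := by
            have h3 : n • Sd - W - (W - n • Sd) = (n • Sd + n • Sd) - (W + W) := by abel
            rwa [h3] at h0'
          exact sub_nonneg.mp h2
        have h4 : (2:ℝ) • W ≤ (2:ℝ) • (n • Sd) := by
          rw [two_smul, two_smul]; exact h1
        have h5 := smul_le_smul_of_nonneg_left h4 (by norm_num : (0:ℝ) ≤ 1/2)
        have h6 : ((1:ℝ)/2 * 2) = 1 := by norm_num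
        rw [smul_smul, smul_smul, h6, one_smul, one_smul] at h5
        exact h5
      have hSdBP : Sd ≤ B • P := by
        rw [hSd, hPdef, Finset.smul_sum]
        exact Finset.sum_le_sum fun j _ => hdiag j
      have hWle : W ≤ ((n:ℝ) * B) • P := by
        refine le_trans hWnSd ?_
        have h1 : (n : ℕ) • Sd = (n : ℝ) • Sd := (Nat.cast_smul_eq_nsmul ℝ n Sd).symm
        rw [h1, ← smul_smul]
        refine smul_le_smul_of_nonneg_left hSdBP ?_
        positivity
      -- lower bound via family Cauchy-Schwarz
      obtain ⟨c, hTc, hcn⟩ := hC f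
      have hTceq : (∑ j, c j • g j) = f := hTc
      have ha_eq : ip f f = ∑ j, c j * star (ip f (g j)) := by
        have h1 : ip (∑ j, c j • g j) f = ip f f := congrArg (fun w => ip w f) hTceq
        rw [← h1, ip_sum_left]
        exact Finset.sum_congr rfl fun j _ => by rw [h_smul, h_star]
      have hGcs := aux_cs_fam c (fun j => ip f (g j))
      rw [← ha_eq, hasa, ← hPdef] at hGcs
      have hGn : ‖∑ j, c j * star (c j)‖ ≤ D * N := by
        have hc2 : ‖c‖ * ‖c‖ ≤ (C * ‖f‖) * (C * ‖f‖) := by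
          have := hcn
          have h0 : (0:ℝ) ≤ ‖c‖ := norm_nonneg c
          nlinarith
        calc ‖∑ j, c j * star (c j)‖ ≤ ∑ j, ‖c j * star (c j)‖ := norm_sum_le _ _
        _ ≤ ∑ (_j : Fin n), ‖c‖ * ‖c‖ := by
            refine Finset.sum_le_sum fun j _ => ?_
            calc ‖c j * star (c j)‖ ≤ ‖c j‖ * ‖star (c j)‖ := norm_mul_le _ _
            _ = ‖c j‖ * ‖c j‖ := by rw [norm_star]
            _ ≤ ‖c‖ * ‖c‖ :=
              mul_le_mul (norm_le_pi_norm c j) (norm_le_pi_norm c j) (norm_nonneg _)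
                (norm_nonneg _)
        _ = (n:ℝ) * (‖c‖ * ‖c‖) := by
            rw [Finset.sum_const, Finset.card_univ, Fintype.card_fin, nsmul_eq_mul]
        _ ≤ (n:ℝ) * ((C * ‖f‖) * (C * ‖f‖)) := by
            refine mul_le_mul_of_nonneg_left hc2 ?_
            positivity
        _ = ((n:ℝ) * (C * C)) * N := by rw [hNdef]; ring
        _ ≤ D * N := by
            have h1 : (n:ℝ) * (C * C) ≤ D := by rw [hDdef]; linarith
            nlinarith
      have haa : ip f f * ip f f ≤ (D * N) • P :=
        le_trans hGcs (aux_smul_coeff_mono hGn hPpos)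
      -- expansion of the inner product of V f with itself
      obtain ⟨Q, hQdef⟩ : ∃ Q : A, Q = ip (f - (t:ℂ) • S f) (f - (t:ℂ) • S f) := ⟨_, rfl⟩
      have halg : ∀ (r : ℝ) (w : A), (algebraMap ℂ A (r:ℂ)) * w = r • w := fun r w => by
        rw [← Algebra.smul_def, ← Complex.coe_smul]
      have halg' : ∀ (r : ℝ) (w : A), w * (algebraMap ℂ A (r:ℂ)) = r • w := fun r w => by
        rw [← Algebra.commutes, ← Algebra.smul_def, ← Complex.coe_smul]
      have hstaralg : star (algebraMap ℂ A ((t:ℝ):ℂ)) = algebraMap ℂ A ((t:ℝ):ℂ) := by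
        rw [show star (algebraMap ℂ A ((t:ℝ):ℂ)) = algebraMap ℂ A (star ((t:ℝ):ℂ)) from
          (algebraMap_star_comm _).symm, Complex.star_def, Complex.conj_ofReal]
      have e1 : ip f ((algebraMap ℂ A ((t:ℝ):ℂ)) • S f) = t • P := by
        rw [ip_smul_right, hstaralg, halg', hipfSf]
      have e2 : ip ((algebraMap ℂ A ((t:ℝ):ℂ)) • S f) f = t • P := by
        rw [h_smul, halg, hipSff]
      have e3 : ip ((algebraMap ℂ A ((t:ℝ):ℂ)) • S f) ((algebraMap ℂ A ((t:ℝ):ℂ)) • S f)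
          = (t * t) • W := by
        rw [h_smul, ip_smul_right, hstaralg, halg', halg, smul_smul, ← hWdef]
      have hQexp : Q = ip f f - t • P - t • P + (t * t) • W := by
        rw [hQdef, smulCE, ip_sub_left, ip_sub_right, ip_sub_right, e1, e2, e3]
        abel
      have hQP : Q ≤ ip f f - t • P := by
        have h1 : (t * t) • W ≤ (t * t) • (((n:ℝ) * B) • P) :=
          smul_le_smul_of_nonneg_left hWle (by positivity)
        have h2 : (t * t) • (((n:ℝ) * B) • P) = t • P := by
          rw [smul_smul]
          congr 1
          rw [mul_assoc, htnB, mul_one]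
        rw [hQexp]
        have h1' : (t * t) • W ≤ t • P := by rw [← h2]; exact h1
        calc ip f f - t • P - t • P + (t * t) • W
            ≤ ip f f - t • P - t • P + t • P := add_le_add_right h1' _
        _ = ip f f - t • P := by abel
      have hQa : Q ≤ ip f f - (β / N) • (ip f f * ip f f) := by
        have h1 : (β / N) • (ip f f * ip f f) ≤ (β / N) • ((D * N) • P) :=
          smul_le_smul_of_nonneg_left haa (by positivity)
        have h2 : (β / N) • ((D * N) • P) = t • P := by
          rw [smul_smul]
          congr 1
          field_simp
          exact hβD
        refine le_trans hQP ?_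
        refine sub_le_sub_left ?_ (ip f f)
        rw [← h2]
        exact h1
      -- spectral estimate
      have hcfc : ip f f - (β / N) • (ip f f * ip f f) ≤ (N * (1 - β)) • (1:A) := by
        have hmul : cfc (fun r : ℝ => r * r) (ip f f) = ip f f * ip f f := by
          rw [cfc_mul _ _ (ip f f), cfc_id' ℝ (ip f f)]
        have hsm : cfc (fun r : ℝ => (β / N) • (r * r)) (ip f f)
            = (β / N) • (ip f f * ip f f) := by
          rw [cfc_smul _ _ (ip f f), hmul]
        have hsub : cfc (fun r : ℝ => r - (β / N) • (r * r)) (ip f f)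
            = ip f f - (β / N) • (ip f f * ip f f) := by
          rw [cfc_sub _ _ (ip f f), cfc_id' ℝ (ip f f), hsm]
        have hconst : cfc (fun _ : ℝ => N * (1 - β)) (ip f f)
            = algebraMap ℝ A (N * (1 - β)) := cfc_const _ _
        have hfinal : (0:A) ≤ cfc
            (fun r : ℝ => (fun _ : ℝ => N * (1 - β)) r - (fun r : ℝ => r - (β / N) • (r * r)) r)
            (ip f f) := by
          refine cfc_nonneg fun r hr => ?_
          have hr0 : 0 ≤ r := spectrum_nonneg_of_nonneg hapos hr
          have hrN : r ≤ N := by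
            have h1 := spectrum.norm_le_norm_of_mem hr
            rwa [Real.norm_of_nonneg hr0, haN] at h1
          have hfact : N * ((N * (1 - β)) - (r - (β / N) * (r * r)))
              = (N - r) * (N - β * N - β * r) := by
            field_simp
            ring
          have hfac1 : 0 ≤ N - r := by linarith
          have hfac2 : 0 ≤ N - β * N - β * r := by nlinarith
          have hprod : 0 ≤ (N - r) * (N - β * N - β * r) := mul_nonneg hfac1 hfac2
          simp only [smul_eq_mul]
          nlinarith
        rw [cfc_sub _ _ (ip f f), hconst, hsub, Algebra.algebraMap_eq_smul_one] at hfinal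
        exact sub_nonneg.mp hfinal
      -- put everything together
      have hQpos : (0:A) ≤ Q := by rw [hQdef]; exact h_pos _
      have hQnorm : ‖Q‖ ≤ N * (1 - β) := by
        have h1 : Q ≤ (N * (1 - β)) • (1:A) := le_trans hQa hcfc
        have h2 := CStarAlgebra.norm_le_norm_of_nonneg_of_le hQpos h1
        rwa [norm_smul, norm_one, mul_one, Real.norm_of_nonneg (by nlinarith)] at h2
      have hfin : ‖f - (t:ℂ) • S f‖ ^ 2 = ‖Q‖ := by
        rw [← norm_sq, hQdef]
      rw [hfin, hNdef] at *
      calc ‖Q‖ ≤ ‖f‖ ^ 2 * (1 - β) := hQnorm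
      _ = (1 - β) * ‖f‖ ^ 2 := by ring
    -- operator norm estimate and invertibility
    have hβ1 : 0 ≤ 1 - β := by linarith
    have hr0 : 0 ≤ Real.sqrt (1 - β) := Real.sqrt_nonneg _
    have hrsq : Real.sqrt (1 - β) ^ 2 = 1 - β := Real.sq_sqrt hβ1
    have hr1 : Real.sqrt (1 - β) < 1 := by nlinarith
    have hVle : ∀ f : E, ‖f - (t:ℂ) • S f‖ ≤ Real.sqrt (1 - β) * ‖f‖ := by
      intro f
      have h1 := key f
      have h2 : ‖f - (t:ℂ) • S f‖ ^ 2 ≤ (Real.sqrt (1 - β) * ‖f‖) ^ 2 := by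
        rw [mul_pow, hrsq]; exact h1
      nlinarith [norm_nonneg (f - (t:ℂ) • S f), mul_nonneg hr0 (norm_nonneg f)]
    have hopnorm : ‖(1 : E →L[ℂ] E) - (t:ℂ) • S‖ < 1 := by
      refine lt_of_le_of_lt (ContinuousLinearMap.opNorm_le_bound _ hr0 fun f => ?_) hr1
      simpa [ContinuousLinearMap.sub_apply, ContinuousLinearMap.smul_apply,
        ContinuousLinearMap.one_apply] using hVle f
    set u : (E →L[ℂ] E)ˣ := Units.oneSub ((1 : E →L[ℂ] E) - (t:ℂ) • S) hopnorm with hudef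
    have huval : (u : E →L[ℂ] E) = (t:ℂ) • S := by
      rw [hudef, Units.val_oneSub, sub_sub_cancel]
    constructor
    · -- injective
      intro f₁ f₂ h12
      have h12' : (∑ j, ip f₁ (g j) • g j) = ∑ j, ip f₂ (g j) • g j := h12
      have hz : (∑ j, ip (f₁ - f₂) (g j) • g j) = 0 := by
        calc (∑ j, ip (f₁ - f₂) (g j) • g j)
            = ∑ j, (ip f₁ (g j) • g j - ip f₂ (g j) • g j) :=
              Finset.sum_congr rfl fun j _ => by rw [ip_sub_left, sub_smul]
        _ = (∑ j, ip f₁ (g j) • g j) - ∑ j, ip f₂ (g j) • g j := Finset.sum_sub_distrib _ _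
        _ = 0 := by rw [h12', sub_self]
      have hP0 : (∑ j, ip (f₁ - f₂) (g j) * star (ip (f₁ - f₂) (g j))) = 0 := by
        have h1 : ip (∑ j, ip (f₁ - f₂) (g j) • g j) (f₁ - f₂)
            = ∑ j, ip (f₁ - f₂) (g j) * star (ip (f₁ - f₂) (g j)) := by
          rw [ip_sum_left]
          exact Finset.sum_congr rfl fun j _ => by rw [h_smul, h_star]
        rw [← h1, hz, ip_zero_left]
      have hxj : ∀ j, ip (f₁ - f₂) (g j) = 0 := by
        intro j
        have h2 := (Finset.sum_eq_zero_iff_of_nonneg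
          (fun j _ => mul_star_self_nonneg (ip (f₁ - f₂) (g j)))).mp hP0 j (Finset.mem_univ j)
        have h3 : ‖ip (f₁ - f₂) (g j)‖ * ‖ip (f₁ - f₂) (g j)‖ = 0 := by
          rw [← CStarRing.norm_self_mul_star, h2, norm_zero]
        have h4 : ‖ip (f₁ - f₂) (g j)‖ = 0 := by
          nlinarith [norm_nonneg (ip (f₁ - f₂) (g j))]
        exact norm_eq_zero.mp h4
      have hww : ip (f₁ - f₂) (f₁ - f₂) = 0 := by
        obtain ⟨c, hc⟩ := hgen (f₁ - f₂)
        have h1 : ip (f₁ - f₂) (f₁ - f₂) = ∑ j, c j * ip (g j) (f₁ - f₂) := by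
          have h2 : ip (∑ j, c j • g j) (f₁ - f₂) = ∑ j, c j * ip (g j) (f₁ - f₂) := by
            rw [ip_sum_left]
            exact Finset.sum_congr rfl fun j _ => h_smul _ _ _
          rw [← h2, ← hc]
        rw [h1]
        refine Finset.sum_eq_zero fun j _ => ?_
        rw [← h_star, hxj j, star_zero, mul_zero]
      exact sub_eq_zero.mp (h_def _ hww)
    · -- surjective
      intro y
      refine ⟨(t:ℂ) • ((↑u⁻¹ : E →L[ℂ] E) y), ?_⟩
      have h1 : (↑u : E →L[ℂ] E) ((↑u⁻¹ : E →L[ℂ] E) y) = y := by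
        calc (↑u : E →L[ℂ] E) ((↑u⁻¹ : E →L[ℂ] E) y)
            = ((↑u : E →L[ℂ] E) * (↑u⁻¹ : E →L[ℂ] E)) y := rfl
        _ = (1 : E →L[ℂ] E) y := by rw [u.mul_inv]
        _ = y := rfl
      rw [huval, ContinuousLinearMap.smul_apply] at h1
      have h3 : S ((t:ℂ) • ((↑u⁻¹ : E →L[ℂ] E) y)) = y := by
        rw [map_smul]; exact h1
      exact h3

  · -- easy direction
    intro hbij f
    obtain ⟨w, hw⟩ := hbij.2 f
    exact ⟨fun j => ip w (g j), hw.symm⟩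
end
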